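/- Let B = {x^{β₁},…,x^{β_μ}} be closed under division with β₁ = 0, and let D ∈ Hilb_B, i.e., D ∈ Hilb_μ is such that for each t the classes of B_t = B ∩ ℂ[x]_t form a basis of ℂ[x]/(D^⊥ + m^{t+1}). Let Λ = {Λ₁,…,Λ_μ} be the unique basis of D dual to B. Then Λ₁ = 1 and, for i = 2,…,μ, Λ_i = Σ_{j:|β_j|<|β_i|} Σ_{k=1}^n μ_{β_i,β_j+e_k} ∫ᵏΛ_j, where μ_{β_i,β_j+e_k} = Λ_i(x^{β_j+e_k}); equivalently ∂_{d_k}(Λ_i) = Σ_{j:|β_j|<|β_i|} μ_{β_i,β_j+e_k} Λ_j for all k. Consequently all coefficients μ_{β_i,α} of Λ_i (for |α| < μ) are determined, as polynomial functions, by the finitely many values {μ_{β_s,β_j+e_k} : |β_s| ≤ |β_i|, |β_j| < |β_s|, k = 1,…,n}. -/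

import Mathlib

open MvPolynomial

/-- Total degree `|β|` of an exponent vector `β ∈ ℕⁿ`. -/
def mdeg {n : ℕ} (a : Fin n →₀ ℕ) : ℕ := ∑ i, a i

/-- Iterated partial derivative `∂^β p`. -/
noncomputable def pdiff {n : ℕ} (β : Fin n →₀ ℕ) (p : MvPolynomial (Fin n) ℂ) :
    MvPolynomial (Fin n) ℂ :=
  (List.finRange n).foldr (fun i q => (fun r => pderiv i r)^[β i] q) p

/-- The linear functional on `ℂ[x]` attached to the dual polynomial `Λ ∈ ℂ[d_ξ]`:
`Λ(p) = Σ_β coeff_β(Λ) • (∂^β p)(ξ)`. -/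
noncomputable def dapply {n : ℕ} (ξ : Fin n → ℂ) (Λ p : MvPolynomial (Fin n) ℂ) : ℂ :=
  ∑ β ∈ Λ.support, coeff β Λ * eval ξ (pdiff β p)

/-- The shifted monomial `(x-ξ)^β`. -/
noncomputable def xpow {n : ℕ} (ξ : Fin n → ℂ) (β : Fin n →₀ ℕ) : MvPolynomial (Fin n) ℂ :=
  ∏ i, (X i - C (ξ i)) ^ β i

/-- `∫ᵏΛ`: substitute `0` for `d_{k+1},…,d_n` in `Λ` and take the antiderivative with
respect to `d_k` having no constant term. -/
noncomputable def integ {n : ℕ} (k : Fin n) (Λ : MvPolynomial (Fin n) ℂ) :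
    MvPolynomial (Fin n) ℂ :=
  let Λ' := aeval (fun i => if i ≤ k then X i else 0) Λ
  ∑ β ∈ Λ'.support, monomial (β + Finsupp.single k 1) (coeff β Λ' / ((β k : ℂ) + 1))

/-- The maximal ideal `m_ξ` of polynomials vanishing at `ξ`. -/
noncomputable def mIdeal {n : ℕ} (ξ : Fin n → ℂ) : Ideal (MvPolynomial (Fin n) ℂ) :=
  RingHom.ker (eval ξ)

/-- `β! = β₁!⋯βₙ!`. -/
def ffact {n : ℕ} (a : Fin n →₀ ℕ) : ℕ := ∏ i, (a i).factorial

set_option maxHeartbeats 1000000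

section Lemmas

variable {n : ℕ}

lemma mdeg_eq_sum (a : Fin n →₀ ℕ) : mdeg a = a.sum fun _ e => e := by
  rw [mdeg, Finsupp.sum_fintype]; intro i; rfl

lemma mdeg_add (a b : Fin n →₀ ℕ) : mdeg (a + b) = mdeg a + mdeg b := by
  simp [mdeg, Finsupp.add_apply, Finset.sum_add_distrib]

lemma mdeg_eq_zero {a : Fin n →₀ ℕ} : mdeg a = 0 ↔ a = 0 := by
  constructor
  · intro h; ext i
    have := Finset.sum_eq_zero_iff.mp h i (Finset.mem_univ i)
    simpa using this
  · rintro rfl; simp [mdeg]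

lemma mdeg_single (k : Fin n) : mdeg (Finsupp.single k 1) = 1 := by
  classical
  simp [mdeg, Finsupp.single_apply]

lemma ffact_ne_zero (a : Fin n →₀ ℕ) : (ffact a : ℂ) ≠ 0 := by
  have : 0 < ffact a := Finset.prod_pos fun i _ => (a i).factorial_pos
  exact_mod_cast this.ne'

lemma ffact_add_single (a : Fin n →₀ ℕ) (k : Fin n) :
    ffact (a + Finsupp.single k 1) = (a k + 1) * ffact a := by
  classical
  have h1 : ((a + Finsupp.single k 1 : Fin n →₀ ℕ)) k = a k + 1 := by
    rw [Finsupp.add_apply, Finsupp.single_eq_same]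
  rw [ffact, ffact,
    ← Finset.mul_prod_erase Finset.univ
      (fun i => ((a + Finsupp.single k 1 : Fin n →₀ ℕ) i).factorial) (Finset.mem_univ k),
    ← Finset.mul_prod_erase Finset.univ (fun i => (a i).factorial) (Finset.mem_univ k),
    h1, Nat.factorial_succ, mul_assoc]
  have h2 : ∏ i ∈ Finset.univ.erase k, ((a + Finsupp.single k 1 : Fin n →₀ ℕ) i).factorial
      = ∏ i ∈ Finset.univ.erase k, (a i).factorial := by
    refine Finset.prod_congr rfl fun i hi => ?_
    have hik : i ≠ k := (Finset.mem_erase.mp hi).1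
    rw [Finsupp.add_apply, Finsupp.single_apply, if_neg (Ne.symm hik), add_zero]
  rw [h2]

lemma eval0_monomial (γ : Fin n →₀ ℕ) (c : ℂ) :
    eval (0 : Fin n → ℂ) (monomial γ c) = if γ = 0 then c else 0 := by
  classical
  rw [eval_monomial]
  by_cases h : γ = 0
  · simp [h]
  · rw [if_neg h]
    obtain ⟨i, hi⟩ : ∃ i, γ i ≠ 0 := by
      by_contra hc; push_neg at hc; exact h (Finsupp.ext hc)
    have : γ.prod (fun j e => (0 : Fin n → ℂ) j ^ e) = 0 := by
      apply Finset.prod_eq_zero (Finsupp.mem_support_iff.mpr hi)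
      simp [zero_pow hi]
    rw [this, mul_zero]

end Lemmas

section PDiff

variable {n : ℕ}

lemma iterate_pderiv_monomial (i : Fin n) (m : ℕ) (γ : Fin n →₀ ℕ) (c : ℂ) :
    (fun r => pderiv i r)^[m] (monomial γ c)
      = monomial (γ - Finsupp.single i m) (c * (γ i).descFactorial m) := by
  induction m with
  | zero => simp
  | succ m ih =>
    rw [Function.iterate_succ_apply', ih, pderiv_monomial]
    have h1 : (γ - Finsupp.single i m : Fin n →₀ ℕ) i = γ i - m := by
      rw [Finsupp.tsub_apply, Finsupp.single_eq_same]
    have h2 : (γ - Finsupp.single i m : Fin n →₀ ℕ) - Finsupp.single i 1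
        = γ - Finsupp.single i (m + 1) := by
      rw [tsub_tsub, ← Finsupp.single_add]
    rw [h1, h2, Nat.descFactorial_succ]
    congr 1
    push_cast
    ring

lemma list_single_sum_apply (δ : Fin n →₀ ℕ) (l : List (Fin n)) (i : Fin n) (hi : i ∉ l) :
    ((l.map fun j => Finsupp.single j (δ j)).sum : Fin n →₀ ℕ) i = 0 := by
  induction l with
  | nil => simp
  | cons a l ih =>
    simp only [List.map_cons, List.sum_cons, Finsupp.add_apply]
    have hia : i ≠ a := fun h => hi (h ▸ List.mem_cons_self)
    rw [Finsupp.single_apply, if_neg (Ne.symm hia), zero_add]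
    exact ih fun h => hi (List.mem_cons_of_mem a h)

lemma foldr_pdiff (δ : Fin n →₀ ℕ) (l : List (Fin n)) (hl : l.Nodup) (γ : Fin n →₀ ℕ) (c : ℂ) :
    l.foldr (fun i q => (fun r => pderiv i r)^[δ i] q) (monomial γ c)
      = monomial (γ - (l.map fun i => Finsupp.single i (δ i)).sum)
          (c * ((l.map fun i => ((γ i).descFactorial (δ i) : ℂ)).prod)) := by
  induction l with
  | nil => simp
  | cons a l ih =>
    have hnd := List.nodup_cons.mp hl
    rw [List.foldr_cons, ih hnd.2, iterate_pderiv_monomial]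
    have h1 : ((γ - (l.map fun i => Finsupp.single i (δ i)).sum : Fin n →₀ ℕ)) a = γ a := by
      rw [Finsupp.tsub_apply, list_single_sum_apply δ l a hnd.1, Nat.sub_zero]
    rw [h1]
    congr 1
    · rw [tsub_tsub, List.map_cons, List.sum_cons, add_comm]
    · rw [List.map_cons, List.prod_cons]; push_cast; ring

lemma pdiff_monomial (δ γ : Fin n →₀ ℕ) (c : ℂ) :
    pdiff δ (monomial γ c)
      = monomial (γ - δ) (c * ∏ i, ((γ i).descFactorial (δ i) : ℂ)) := by
  have hs : ((List.finRange n).map fun i => Finsupp.single i (δ i)).sum = δ := by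
    rw [← Fin.sum_univ_def]; exact Finsupp.univ_sum_single δ
  rw [pdiff, foldr_pdiff δ _ (List.nodup_finRange n), hs, Fin.prod_univ_def]

lemma eval0_pdiff_monomial (δ γ : Fin n →₀ ℕ) (c : ℂ) :
    eval (0 : Fin n → ℂ) (pdiff δ (monomial γ c))
      = if δ = γ then (ffact γ : ℂ) * c else 0 := by
  classical
  rw [pdiff_monomial, eval0_monomial]
  by_cases h : δ = γ
  · subst h
    rw [if_pos rfl]
    simp only [tsub_self, if_true, eq_self_iff_true]
    have : ∀ i : Fin n, ((δ i).descFactorial (δ i) : ℂ) = ((δ i).factorial : ℂ) := by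
      intro i; rw [Nat.descFactorial_self]
    rw [Finset.prod_congr rfl fun i _ => this i, ffact]
    push_cast
    ring
  · rw [if_neg h]
    by_cases hle : ∀ i, δ i ≤ γ i
    · obtain ⟨i, hi⟩ : ∃ i, δ i ≠ γ i := by
        by_contra hc; push_neg at hc; exact h (Finsupp.ext hc)
      have hlt : δ i < γ i := lt_of_le_of_ne (hle i) hi
      have : (γ - δ : Fin n →₀ ℕ) ≠ 0 := by
        intro hz
        have h3 : (γ - δ : Fin n →₀ ℕ) i = 0 := by rw [hz]; rfl
        rw [Finsupp.tsub_apply] at h3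
        omega
      rw [if_neg this]
    · push_neg at hle
      obtain ⟨i, hi⟩ := hle
      have : ((γ i).descFactorial (δ i) : ℂ) = 0 := by
        rw [Nat.descFactorial_eq_zero_iff_lt.mpr hi]; norm_num
      rw [Finset.prod_eq_zero (Finset.mem_univ i) this, mul_zero]
      simp

end PDiff

section Dapply

variable {n : ℕ}

lemma iterate_pderiv_add (i : Fin n) (m : ℕ) (p q : MvPolynomial (Fin n) ℂ) :
    (fun r => pderiv i r)^[m] (p + q)
      = (fun r => pderiv i r)^[m] p + (fun r => pderiv i r)^[m] q := by
  induction m with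
  | zero => simp
  | succ m ih => rw [Function.iterate_succ_apply', Function.iterate_succ_apply',
      Function.iterate_succ_apply', ih, map_add]

lemma pdiff_add (δ : Fin n →₀ ℕ) (p q : MvPolynomial (Fin n) ℂ) :
    pdiff δ (p + q) = pdiff δ p + pdiff δ q := by
  rw [pdiff, pdiff, pdiff]
  induction (List.finRange n) generalizing p q with
  | nil => simp
  | cons a l ih => rw [List.foldr_cons, List.foldr_cons, List.foldr_cons, ih,
      iterate_pderiv_add]

lemma eval0_pdiff (δ : Fin n →₀ ℕ) (p : MvPolynomial (Fin n) ℂ) :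
    eval (0 : Fin n → ℂ) (pdiff δ p) = (ffact δ : ℂ) * coeff δ p := by
  classical
  induction p using MvPolynomial.induction_on' with
  | monomial γ c =>
    rw [eval0_pdiff_monomial, coeff_monomial]
    by_cases h : δ = γ
    · subst h; rw [if_pos rfl, if_pos rfl]
    · rw [if_neg h, if_neg fun hh => h hh.symm, mul_zero]
  | add p q hp hq => rw [pdiff_add, map_add, hp, hq, coeff_add, mul_add]

lemma dapply_eq' (Λ p : MvPolynomial (Fin n) ℂ) :
    dapply 0 Λ p = ∑ β ∈ Λ.support, coeff β Λ * ((ffact β : ℂ) * coeff β p) := by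
  rw [dapply]
  exact Finset.sum_congr rfl fun β _ => by rw [eval0_pdiff]

lemma dapply_eq (Λ p : MvPolynomial (Fin n) ℂ) :
    dapply 0 Λ p = ∑ γ ∈ p.support, (ffact γ : ℂ) * coeff γ p * coeff γ Λ := by
  classical
  rw [dapply_eq']
  have h1 : ∑ β ∈ Λ.support, coeff β Λ * ((ffact β : ℂ) * coeff β p)
      = ∑ β ∈ Λ.support ∪ p.support, coeff β Λ * ((ffact β : ℂ) * coeff β p) :=
    Finset.sum_subset Finset.subset_union_left
      (fun β _ hβ => by rw [notMem_support_iff.mp hβ, zero_mul])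
  have h2 : ∑ γ ∈ p.support, (ffact γ : ℂ) * coeff γ p * coeff γ Λ
      = ∑ γ ∈ Λ.support ∪ p.support, (ffact γ : ℂ) * coeff γ p * coeff γ Λ :=
    Finset.sum_subset Finset.subset_union_right
      (fun γ _ hγ => by rw [notMem_support_iff.mp hγ, mul_zero, zero_mul])
  rw [h1, h2]
  exact Finset.sum_congr rfl fun β _ => by ring

lemma dapply_zero_left (p : MvPolynomial (Fin n) ℂ) : dapply 0 0 p = 0 := by
  rw [dapply_eq]; simp

lemma dapply_monomial (Λ : MvPolynomial (Fin n) ℂ) (γ : Fin n →₀ ℕ) (c : ℂ) :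
    dapply 0 Λ (monomial γ c) = (ffact γ : ℂ) * coeff γ Λ * c := by
  classical
  rw [dapply_eq']
  have : ∀ β ∈ Λ.support, coeff β Λ * ((ffact β : ℂ) * coeff β (monomial γ c))
      = if β = γ then coeff γ Λ * ((ffact γ : ℂ) * c) else 0 := by
    intro β _
    rw [coeff_monomial]
    by_cases h : β = γ
    · subst h; rw [if_pos rfl, if_pos rfl]
    · rw [if_neg fun hh => h hh.symm, if_neg h, mul_zero, mul_zero]
  rw [Finset.sum_congr rfl this, Finset.sum_ite_eq' Λ.support γ]
  by_cases h : γ ∈ Λ.support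
  · rw [if_pos h]; ring
  · rw [if_neg h, notMem_support_iff.mp h]; ring

lemma dapply_add_left (Λ₁ Λ₂ p : MvPolynomial (Fin n) ℂ) :
    dapply 0 (Λ₁ + Λ₂) p = dapply 0 Λ₁ p + dapply 0 Λ₂ p := by
  rw [dapply_eq, dapply_eq, dapply_eq, ← Finset.sum_add_distrib]
  exact Finset.sum_congr rfl fun γ _ => by rw [coeff_add]; ring

lemma dapply_smul_left (a : ℂ) (Λ p : MvPolynomial (Fin n) ℂ) :
    dapply 0 (a • Λ) p = a * dapply 0 Λ p := by
  rw [dapply_eq, dapply_eq, Finset.mul_sum]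
  exact Finset.sum_congr rfl fun γ _ => by rw [coeff_smul, smul_eq_mul]; ring

lemma dapply_sum_smul {ι : Type*} (S : Finset ι) (c : ι → ℂ)
    (Λf : ι → MvPolynomial (Fin n) ℂ) (p : MvPolynomial (Fin n) ℂ) :
    dapply 0 (∑ s ∈ S, c s • Λf s) p = ∑ s ∈ S, c s * dapply 0 (Λf s) p := by
  classical
  induction S using Finset.induction_on with
  | empty => simp [dapply_zero_left]
  | insert _ _ ha ih =>
    rw [Finset.sum_insert ha, Finset.sum_insert ha, dapply_add_left, dapply_smul_left, ih]

lemma dapply_p_add (Λ p q : MvPolynomial (Fin n) ℂ) :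
    dapply 0 Λ (p + q) = dapply 0 Λ p + dapply 0 Λ q := by
  rw [dapply_eq', dapply_eq', dapply_eq', ← Finset.sum_add_distrib]
  exact Finset.sum_congr rfl fun β _ => by rw [coeff_add]; ring

lemma dapply_p_smul (Λ : MvPolynomial (Fin n) ℂ) (a : ℂ) (p : MvPolynomial (Fin n) ℂ) :
    dapply 0 Λ (a • p) = a * dapply 0 Λ p := by
  rw [dapply_eq', dapply_eq', Finset.mul_sum]
  exact Finset.sum_congr rfl fun β _ => by rw [coeff_smul, smul_eq_mul]; ring

lemma dapply_p_sum {ι : Type*} (Λ : MvPolynomial (Fin n) ℂ) (S : Finset ι)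
    (f : ι → MvPolynomial (Fin n) ℂ) :
    dapply 0 Λ (∑ s ∈ S, f s) = ∑ s ∈ S, dapply 0 Λ (f s) := by
  classical
  induction S using Finset.induction_on with
  | empty => simp [dapply_eq']
  | insert _ _ ha ih => rw [Finset.sum_insert ha, Finset.sum_insert ha, dapply_p_add, ih]

lemma coeff_pderiv (k : Fin n) (γ : Fin n →₀ ℕ) (Λ : MvPolynomial (Fin n) ℂ) :
    coeff γ (pderiv k Λ) = ((γ k : ℂ) + 1) * coeff (γ + Finsupp.single k 1) Λ := by
  classical
  induction Λ using MvPolynomial.induction_on' with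
  | monomial β c =>
    rw [pderiv_monomial, coeff_monomial, coeff_monomial]
    by_cases h : β = γ + Finsupp.single k 1
    · subst h
      have h1 : (γ + Finsupp.single k 1 - Finsupp.single k 1 : Fin n →₀ ℕ) = γ := by
        rw [add_tsub_cancel_right]
      rw [if_pos h1, if_pos rfl]
      have h2 : ((γ + Finsupp.single k 1 : Fin n →₀ ℕ)) k = γ k + 1 := by
        rw [Finsupp.add_apply, Finsupp.single_eq_same]
      rw [h2]
      push_cast
      ring
    · rw [if_neg h, mul_zero]
      by_cases h2 : β - Finsupp.single k 1 = γ
      · rw [if_pos h2]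
        have hβk : β k = 0 := by
          by_contra hb
          apply h
          rw [← h2, tsub_add_cancel_of_le]
          rw [Finsupp.single_le_iff]
          omega
        rw [hβk]
        norm_num
      · rw [if_neg h2]
  | add p q hp hq => rw [map_add, coeff_add, coeff_add, hp, hq, mul_add]

lemma dapply_pderiv (Λ : MvPolynomial (Fin n) ℂ) (k : Fin n) (γ : Fin n →₀ ℕ) (c : ℂ) :
    dapply 0 (pderiv k Λ) (monomial γ c)
      = dapply 0 Λ (monomial (γ + Finsupp.single k 1) c) := by
  rw [dapply_monomial, dapply_monomial, coeff_pderiv]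
  have h1 : (ffact (γ + Finsupp.single k 1) : ℂ) = ((γ k : ℂ) + 1) * (ffact γ : ℂ) := by
    rw [ffact_add_single]; push_cast; ring
  rw [h1]
  ring

lemma dapply_mul_X (Λ : MvPolynomial (Fin n) ℂ) (k : Fin n) (p : MvPolynomial (Fin n) ℂ) :
    dapply 0 Λ (X k * p) = dapply 0 (pderiv k Λ) p := by
  induction p using MvPolynomial.induction_on' with
  | monomial γ c =>
    have : (X k : MvPolynomial (Fin n) ℂ) * monomial γ c
        = monomial (γ + Finsupp.single k 1) c := by
      rw [X, monomial_mul, one_mul, add_comm]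
    rw [this, dapply_pderiv]
  | add p q hp hq => rw [mul_add, dapply_p_add, dapply_p_add, hp, hq]

end Dapply

section MIdealLemmas

variable {n : ℕ}

lemma mem_mIdeal_iff {p : MvPolynomial (Fin n) ℂ} :
    p ∈ mIdeal (0 : Fin n → ℂ) ↔ coeff 0 p = 0 := by
  rw [mIdeal, RingHom.mem_ker, eval_zero, constantCoeff_eq]

lemma supp_pow_mIdeal (k : ℕ) (p : MvPolynomial (Fin n) ℂ)
    (hp : p ∈ (mIdeal (0 : Fin n → ℂ)) ^ k) :
    ∀ γ ∈ p.support, k ≤ mdeg γ := by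
  classical
  induction k generalizing p with
  | zero => intro γ _; exact Nat.zero_le _
  | succ k ih =>
    rw [pow_succ] at hp
    refine Submodule.mul_induction_on (C := fun r => ∀ γ ∈ r.support, k + 1 ≤ mdeg γ)
      hp ?_ ?_
    · intro m hm' x hx
      intro γ hγ
      have hc : coeff γ (m * x) ≠ 0 := mem_support_iff.mp hγ
      rw [coeff_mul] at hc
      obtain ⟨⟨δ, ε⟩, hmem, hne⟩ := Finset.exists_ne_zero_of_sum_ne_zero hc
      have hδε : δ + ε = γ := Finset.HasAntidiagonal.mem_antidiagonal.mp hmem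
      have hδ : k ≤ mdeg δ := ih m hm' δ (mem_support_iff.mpr fun h => hne (by rw [h, zero_mul]))
      have hε : ε ≠ 0 := by
        intro h
        apply hne
        rw [h]
        rw [(mem_mIdeal_iff).mp hx, mul_zero]
      have hε1 : 1 ≤ mdeg ε := by
        rcases Nat.eq_zero_or_pos (mdeg ε) with h | h
        · exact absurd (mdeg_eq_zero.mp h) hε
        · exact h
      rw [← hδε, mdeg_add]
      omega
    · intro x y ihx ihy
      intro γ hγ
      rcases Finset.mem_union.mp (MvPolynomial.support_add hγ) with h | h
      · exact ihx γ h
      · exact ihy γ h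

lemma prod_pow_mem_pow {R : Type*} [CommRing R] {I : Ideal R} {ι : Type*} (x : ι → R)
    (hx : ∀ i, x i ∈ I) (e : ι → ℕ) (s : Finset ι) :
    ∏ i ∈ s, x i ^ e i ∈ I ^ (∑ i ∈ s, e i) := by
  classical
  induction s using Finset.induction_on with
  | empty => simp [Ideal.one_eq_top]
  | insert _ _ ha ih =>
    rw [Finset.prod_insert ha, Finset.sum_insert ha, pow_add]
    exact Ideal.mul_mem_mul (Ideal.pow_mem_pow (hx _) _) ih

lemma monomial_mem_pow_mIdeal (γ : Fin n →₀ ℕ) :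
    monomial γ (1 : ℂ) ∈ (mIdeal (0 : Fin n → ℂ)) ^ (mdeg γ) := by
  have h1 : (monomial γ (1 : ℂ)) = ∏ i, X i ^ γ i := by
    rw [monomial_eq, C_1, one_mul]
    exact Finsupp.prod_fintype _ _ fun i => pow_zero _
  rw [h1, mdeg]
  exact prod_pow_mem_pow _ (fun i => mem_mIdeal_iff.mpr (by rw [coeff_zero_X])) _ _

end MIdealLemmas

section Integ

variable {n : ℕ}

lemma coeff_aeval_trunc (k : Fin n) (Λ : MvPolynomial (Fin n) ℂ) (γ : Fin n →₀ ℕ) :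
    coeff γ (aeval (fun i => if i ≤ k then (X i : MvPolynomial (Fin n) ℂ) else 0) Λ)
      = if (∀ i, k < i → γ i = 0) then coeff γ Λ else 0 := by
  classical
  induction Λ using MvPolynomial.induction_on' with
  | monomial β c =>
    rw [aeval_monomial]
    by_cases hβ : ∀ i, k < i → β i = 0
    · have hprod : (β.prod fun i e =>
          (if i ≤ k then (X i : MvPolynomial (Fin n) ℂ) else 0) ^ e)
          = β.prod fun i e => (X i : MvPolynomial (Fin n) ℂ) ^ e := by
        apply Finsupp.prod_congr
        intro i hi
        have : i ≤ k := by
          by_contra hc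
          exact Finsupp.mem_support_iff.mp hi (hβ i (lt_of_not_ge hc))
        rw [if_pos this]
      have hmon : (monomial β (1 : ℂ)) = β.prod fun i e => (X i : MvPolynomial (Fin n) ℂ) ^ e := by
        rw [monomial_eq, C_1, one_mul]
      rw [hprod, ← hmon]
      have : (algebraMap ℂ (MvPolynomial (Fin n) ℂ)) c * monomial β 1 = monomial β c := by
        rw [algebraMap_eq, C_mul_monomial, mul_one]
      rw [this, coeff_monomial]
      by_cases h : β = γ
      · subst h
        simp only [if_pos rfl]
        rw [if_pos hβ]
      · rw [if_neg h]
        split_ifs <;> rfl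
    · push_neg at hβ
      obtain ⟨i, hki, hβi⟩ := hβ
      have hz : (β.prod fun j e =>
          (if j ≤ k then (X j : MvPolynomial (Fin n) ℂ) else 0) ^ e) = 0 := by
        apply Finset.prod_eq_zero (Finsupp.mem_support_iff.mpr hβi)
        have hnle : ¬ i ≤ k := not_le.mpr hki
        simp [hnle, zero_pow hβi]
      rw [hz, mul_zero, coeff_zero]
      split_ifs with h2
      · rw [coeff_monomial, if_neg]
        intro hh
        subst hh
        exact hβi (h2 i hki)
      · rfl
  | add p q hp hq =>
    rw [map_add, coeff_add, hp, hq, coeff_add]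
    split_ifs <;> simp

lemma coeff_integ (k : Fin n) (Λ : MvPolynomial (Fin n) ℂ) (δ : Fin n →₀ ℕ) :
    coeff δ (integ k Λ)
      = if δ k ≠ 0 ∧ (∀ i, k < i → δ i = 0)
          then coeff (δ - Finsupp.single k 1) Λ / (δ k : ℂ) else 0 := by
  classical
  rw [integ, coeff_sum]
  set Λ' := aeval (fun i => if i ≤ k then (X i : MvPolynomial (Fin n) ℂ) else 0) Λ with hΛ'
  by_cases hδk : δ k = 0
  · rw [if_neg (by simp [hδk])]
    apply Finset.sum_eq_zero
    intro β _
    rw [coeff_monomial, if_neg]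
    intro hh
    have : ((β + Finsupp.single k 1 : Fin n →₀ ℕ)) k = δ k := by rw [hh]
    rw [Finsupp.add_apply, Finsupp.single_eq_same] at this
    omega
  · have hle : Finsupp.single k 1 ≤ δ := Finsupp.single_le_iff.mpr (by omega)
    have hcan : δ - Finsupp.single k 1 + Finsupp.single k 1 = δ := tsub_add_cancel_of_le hle
    have hcond : ∀ β : Fin n →₀ ℕ, (β + Finsupp.single k 1 = δ) ↔ β = δ - Finsupp.single k 1 := by
      intro β
      constructor
      · intro h
        have : β + Finsupp.single k 1 = (δ - Finsupp.single k 1) + Finsupp.single k 1 := by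
          rw [hcan, h]
        exact add_right_cancel this
      · rintro rfl; exact hcan
    have hsum : ∀ β ∈ Λ'.support,
        coeff δ (monomial (β + Finsupp.single k 1) (coeff β Λ' / ((β k : ℂ) + 1)))
        = if β = δ - Finsupp.single k 1 then coeff β Λ' / ((β k : ℂ) + 1) else 0 := by
      intro β _
      rw [coeff_monomial]
      by_cases h : β + Finsupp.single k 1 = δ
      · rw [if_pos h, if_pos ((hcond β).mp h)]
      · rw [if_neg h, if_neg fun hh => h ((hcond β).mpr hh)]
    rw [Finset.sum_congr rfl hsum, Finset.sum_ite_eq' Λ'.support (δ - Finsupp.single k 1)]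
    have hkk : ((δ - Finsupp.single k 1 : Fin n →₀ ℕ) k : ℂ) + 1 = (δ k : ℂ) := by
      rw [Finsupp.tsub_apply, Finsupp.single_eq_same]
      have : δ k - 1 + 1 = δ k := by omega
      exact_mod_cast congrArg (Nat.cast : ℕ → ℂ) this
    have hLHS : (if (δ - Finsupp.single k 1) ∈ Λ'.support
        then coeff (δ - Finsupp.single k 1) Λ' / (((δ - Finsupp.single k 1 : Fin n →₀ ℕ) k : ℂ) + 1)
        else 0) = coeff (δ - Finsupp.single k 1) Λ' / (δ k : ℂ) := by
      split_ifs with h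
      · rw [hkk]
      · rw [notMem_support_iff.mp h, zero_div]
    rw [hLHS, hΛ', coeff_aeval_trunc]
    have hsub : ∀ i, k < i → (δ - Finsupp.single k 1 : Fin n →₀ ℕ) i = δ i := by
      intro i hki
      rw [Finsupp.tsub_apply, Finsupp.single_apply,
        if_neg (fun hh : k = i => absurd (hh ▸ hki) (lt_irrefl _)), Nat.sub_zero]
    have hiff : (∀ i, k < i → (δ - Finsupp.single k 1 : Fin n →₀ ℕ) i = 0)
        ↔ (∀ i, k < i → δ i = 0) := by
      constructor <;> intro h i hki
      · rw [← hsub i hki]; exact h i hki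
      · rw [hsub i hki]; exact h i hki
    by_cases h2 : ∀ i, k < i → δ i = 0
    · rw [if_pos (hiff.mpr h2), if_pos ⟨hδk, h2⟩]
    · rw [if_neg (fun hh => h2 (hiff.mp hh)), if_neg (by tauto), zero_div]

lemma integ_sum_smul {ι : Type*} (k : Fin n) (S : Finset ι) (c : ι → ℂ)
    (f : ι → MvPolynomial (Fin n) ℂ) :
    integ k (∑ s ∈ S, c s • f s) = ∑ s ∈ S, c s • integ k (f s) := by
  apply MvPolynomial.ext
  intro δ
  rw [coeff_integ, coeff_sum]
  simp only [coeff_smul, smul_eq_mul, coeff_integ, coeff_sum]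
  split_ifs with h
  · rw [Finset.sum_div]
    exact Finset.sum_congr rfl fun s _ => by rw [mul_div_assoc]
  · simp

lemma integ_telescope (Λ : MvPolynomial (Fin n) ℂ) (h0 : coeff 0 Λ = 0) :
    ∑ k, integ k (pderiv k Λ) = Λ := by
  classical
  apply MvPolynomial.ext
  intro δ
  rw [coeff_sum]
  have hterm : ∀ k, coeff δ (integ k (pderiv k Λ))
      = if δ k ≠ 0 ∧ (∀ i, k < i → δ i = 0) then coeff δ Λ else 0 := by
    intro k
    rw [coeff_integ, coeff_pderiv]
    split_ifs with h
    · have hle : Finsupp.single k 1 ≤ δ := Finsupp.single_le_iff.mpr (by omega)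
      have hcan : δ - Finsupp.single k 1 + Finsupp.single k 1 = δ := tsub_add_cancel_of_le hle
      have hkk : ((δ - Finsupp.single k 1 : Fin n →₀ ℕ) k : ℂ) + 1 = (δ k : ℂ) := by
        rw [Finsupp.tsub_apply, Finsupp.single_eq_same]
        have h2 : δ k - 1 + 1 = δ k := by omega
        exact_mod_cast congrArg (Nat.cast : ℕ → ℂ) h2
      rw [hkk, hcan]
      have hδk : (δ k : ℂ) ≠ 0 := Nat.cast_ne_zero.mpr h.1
      rw [mul_div_assoc, mul_comm, div_mul_cancel₀ _ hδk]
    · rfl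
  rw [Finset.sum_congr rfl fun k _ => hterm k]
  by_cases hδ : δ = 0
  · subst hδ
    rw [h0]
    apply Finset.sum_eq_zero
    intro k _
    rw [if_neg (by simp)]
  · have hne : δ.support.Nonempty := Finsupp.support_nonempty_iff.mpr hδ
    set k₀ := δ.support.max' hne with hk₀
    have hk₀mem : k₀ ∈ δ.support := δ.support.max'_mem hne
    have hk₀ne : δ k₀ ≠ 0 := Finsupp.mem_support_iff.mp hk₀mem
    have hk₀max : ∀ i, k₀ < i → δ i = 0 := by
      intro i hi
      by_contra hc
      have : i ∈ δ.support := Finsupp.mem_support_iff.mpr hc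
      exact absurd (δ.support.le_max' i this) (not_le.mpr hi)
    rw [Finset.sum_eq_single_of_mem k₀ (Finset.mem_univ k₀)]
    · rw [if_pos ⟨hk₀ne, hk₀max⟩]
    · intro k _ hk
      rw [if_neg]
      rintro ⟨h1, h2⟩
      rcases lt_or_gt_of_ne hk with h | h
      · exact hk₀ne (h2 k₀ h)
      · exact h1 (hk₀max k h)
end Integ

/-- for D ∈ Hilb_B with B closed under division, the unique dual basis Λ
satisfies Λ₁ = 1, the integration recursion with μ_{β_i,β_j+e_k} = Λ_i(x^{β_j+e_k}),
the derivative formula, and is uniquely determined by these finitely many values. -/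
theorem statement14 {n μ : ℕ} (hμ : 0 < μ)
    (β : Fin μ → (Fin n →₀ ℕ)) (hβinj : Function.Injective β)
    (hβ0 : β ⟨0, hμ⟩ = 0)
    (hdiv : ∀ (i : Fin μ) (k : Fin n), β i k ≠ 0 → ∃ j, β j = β i - Finsupp.single k 1)
    (D : Submodule ℂ (MvPolynomial (Fin n) ℂ))
    (hD : D ≤ restrictTotalDegree (Fin n) ℂ (μ - 1))
    (hdim : Module.finrank ℂ D = μ)
    (hstab : ∀ Λ' ∈ D, ∀ i : Fin n, pderiv i Λ' ∈ D)
    (hquot : ∀ Q : Ideal (MvPolynomial (Fin n) ℂ),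
      (↑Q : Set (MvPolynomial (Fin n) ℂ)) =
          {p | ∀ Λ' ∈ D, dapply (0 : Fin n → ℂ) Λ' p = 0} →
      ∀ t : ℕ, ∃ bt : Module.Basis {j : Fin μ // mdeg (β j) ≤ t} ℂ
          (MvPolynomial (Fin n) ℂ ⧸ (Q + mIdeal (0 : Fin n → ℂ) ^ (t + 1))),
        ∀ j, bt j = Ideal.Quotient.mk (Q + mIdeal (0 : Fin n → ℂ) ^ (t + 1))
          (monomial (β j.1) (1 : ℂ)))
    (Λ : Fin μ → MvPolynomial (Fin n) ℂ)
    (hmem : ∀ i, Λ i ∈ D)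
    (hdual : ∀ i j, dapply (0 : Fin n → ℂ) (Λ i) (monomial (β j) (1 : ℂ)) =
      if i = j then 1 else 0) :
    Λ ⟨0, hμ⟩ = 1 ∧
    (∀ i, i ≠ ⟨0, hμ⟩ →
      Λ i = ∑ j ∈ Finset.univ.filter (fun j => mdeg (β j) < mdeg (β i)), ∑ k,
        dapply (0 : Fin n → ℂ) (Λ i) (monomial (β j + Finsupp.single k 1) (1 : ℂ)) •
          integ k (Λ j)) ∧
    (∀ (i : Fin μ) (k : Fin n),
      pderiv k (Λ i) =
        ∑ j ∈ Finset.univ.filter (fun j => mdeg (β j) < mdeg (β i)),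
          dapply (0 : Fin n → ℂ) (Λ i) (monomial (β j + Finsupp.single k 1) (1 : ℂ)) •
            Λ j) ∧
    (∀ Λ' : Fin μ → MvPolynomial (Fin n) ℂ,
      Λ' ⟨0, hμ⟩ = 1 →
      (∀ i, i ≠ ⟨0, hμ⟩ →
        Λ' i = ∑ j ∈ Finset.univ.filter (fun j => mdeg (β j) < mdeg (β i)), ∑ k,
          dapply (0 : Fin n → ℂ) (Λ i) (monomial (β j + Finsupp.single k 1) (1 : ℂ)) •
            integ k (Λ' j)) →
      Λ' = Λ) := by
  classical
  have hffact0 : (ffact (0 : Fin n →₀ ℕ) : ℂ) = 1 := by simp [ffact]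
  -- β j is in the support of Λ j
  have hsuppβ : ∀ j, coeff (β j) (Λ j) ≠ 0 := by
    intro j hc
    have := hdual j j
    rw [if_pos rfl, dapply_monomial, hc] at this
    simp at this
  -- degrees of β are at most μ - 1
  have hdegall : ∀ j, mdeg (β j) ≤ μ - 1 := by
    intro j
    have h1 := hD (hmem j)
    rw [mem_restrictTotalDegree] at h1
    refine le_trans ?_ h1
    rw [mdeg_eq_sum]
    exact le_totalDegree (mem_support_iff.mpr (hsuppβ j))
  -- elements of D kill m^μ
  have hkillm : ∀ Λ' ∈ D, ∀ p ∈ (mIdeal (0 : Fin n → ℂ)) ^ μ, dapply 0 Λ' p = 0 := by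
    intro Λ' hΛ' p hp
    rw [dapply_eq]
    apply Finset.sum_eq_zero
    intro γ hγ
    by_cases hc : coeff γ Λ' = 0
    · rw [hc, mul_zero]
    · exfalso
      have h1 : μ ≤ mdeg γ := supp_pow_mIdeal μ p hp γ hγ
      have h2 := hD hΛ'
      rw [mem_restrictTotalDegree] at h2
      have h3 : mdeg γ ≤ μ - 1 := by
        refine le_trans ?_ h2
        rw [mdeg_eq_sum]
        exact le_totalDegree (mem_support_iff.mpr hc)
      omega
  haveI : Nonempty (Fin μ) := ⟨⟨0, hμ⟩⟩
  haveI : FiniteDimensional ℂ D := FiniteDimensional.of_finrank_pos (by rw [hdim]; exact hμ)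
  -- linear independence of Λ
  have hLI : LinearIndependent ℂ Λ := by
    rw [Fintype.linearIndependent_iff]
    intro g hg j
    have h1 := dapply_sum_smul Finset.univ g Λ (monomial (β j) 1)
    rw [hg, dapply_zero_left] at h1
    have h2 : ∀ i ∈ Finset.univ, g i * dapply 0 (Λ i) (monomial (β j) (1 : ℂ))
        = if i = j then g i else 0 := by
      intro i _
      rw [hdual]
      split_ifs <;> ring
    rw [Finset.sum_congr rfl h2, Finset.sum_ite_eq' Finset.univ j,
      if_pos (Finset.mem_univ j)] at h1
    exact h1.symm
  -- extraction of coefficients via duality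
  have hextract : ∀ (c : Fin μ → ℂ) j,
      dapply 0 (∑ i, c i • Λ i) (monomial (β j) (1 : ℂ)) = c j := by
    intro c j
    rw [dapply_sum_smul]
    have h2 : ∀ i ∈ Finset.univ, c i * dapply 0 (Λ i) (monomial (β j) (1 : ℂ))
        = if i = j then c i else 0 := by
      intro i _
      rw [hdual]
      split_ifs <;> ring
    rw [Finset.sum_congr rfl h2, Finset.sum_ite_eq' Finset.univ j,
      if_pos (Finset.mem_univ j)]
  -- Λ spans D
  have hspan : ∀ q ∈ D, ∃ c : Fin μ → ℂ, ∑ i, c i • Λ i = q := by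
    have hLID : LinearIndependent ℂ (fun i => (⟨Λ i, hmem i⟩ : D)) := by
      apply LinearIndependent.of_comp D.subtype
      exact hLI
    have htop : Submodule.span ℂ (Set.range fun i => (⟨Λ i, hmem i⟩ : D)) = ⊤ :=
      hLID.span_eq_top_of_card_eq_finrank (by simp [hdim])
    intro q hq
    have hmem2 : (⟨q, hq⟩ : D) ∈ Submodule.span ℂ (Set.range fun i => (⟨Λ i, hmem i⟩ : D)) := by
      rw [htop]; trivial
    obtain ⟨c, hc⟩ := (Submodule.mem_span_range_iff_exists_fun ℂ).mp hmem2
    refine ⟨c, ?_⟩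
    have h3 := congrArg (Subtype.val) hc
    simpa using h3
  -- the ideal Q = D^⊥
  have hQmul : ∀ c x : MvPolynomial (Fin n) ℂ,
      (∀ Λ' ∈ D, dapply 0 Λ' x = 0) → ∀ Λ' ∈ D, dapply 0 Λ' (c * x) = 0 := by
    intro c
    induction c using MvPolynomial.induction_on with
    | C a =>
      intro x hx Λ' hΛ'
      have h1 : (C a : MvPolynomial (Fin n) ℂ) * x = a • x := (smul_eq_C_mul x a).symm
      rw [h1, dapply_p_smul, hx Λ' hΛ', mul_zero]
    | add p q hp hq =>
      intro x hx Λ' hΛ'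
      rw [add_mul, dapply_p_add, hp x hx Λ' hΛ', hq x hx Λ' hΛ', add_zero]
    | mul_X p i hp =>
      intro x hx Λ' hΛ'
      have h1 : p * X i * x = p * (X i * x) := by ring
      rw [h1]
      refine hp (X i * x) ?_ Λ' hΛ'
      intro Λ'' hΛ''
      rw [dapply_mul_X]
      exact hx _ (hstab Λ'' hΛ'' i)
  let Q : Ideal (MvPolynomial (Fin n) ℂ) :=
    { carrier := {p | ∀ Λ' ∈ D, dapply 0 Λ' p = 0}
      add_mem' := fun {a b} ha hb Λ' hΛ' => by
        rw [dapply_p_add, ha Λ' hΛ', hb Λ' hΛ', add_zero]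
      zero_mem' := fun Λ' _ => by rw [dapply_eq']; simp
      smul_mem' := fun c x hx => by
        rw [smul_eq_mul]
        exact hQmul c x hx }
  have hQ : (↑Q : Set (MvPolynomial (Fin n) ℂ)) =
      {p | ∀ Λ' ∈ D, dapply (0 : Fin n → ℂ) Λ' p = 0} := rfl
  have hQmem : ∀ p, p ∈ Q ↔ ∀ Λ' ∈ D, dapply (0 : Fin n → ℂ) Λ' p = 0 := fun p => Iff.rfl
  have hB := hquot Q hQ
  -- the surjectivity map G
  let G : D →ₗ[ℂ] (Fin μ → ℂ) :=
    { toFun := fun q s => dapply 0 q.1 (monomial (β s) 1)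
      map_add' := fun q q' => by
        funext s
        exact dapply_add_left q.1 q'.1 _
      map_smul' := fun a q => by
        funext s
        simp only [RingHom.id_apply, Pi.smul_apply, smul_eq_mul]
        exact dapply_smul_left a q.1 _ }
  have hGinj : Function.Injective G := by
    rw [← LinearMap.ker_eq_bot, Submodule.eq_bot_iff]
    intro q hq
    have hq0 : ∀ s, dapply 0 q.1 (monomial (β s) (1 : ℂ)) = 0 := by
      intro s
      exact congrFun (LinearMap.mem_ker.mp hq) s
    obtain ⟨c, hc⟩ := hspan q.1 q.2
    have hcz : ∀ s, c s = 0 := by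
      intro s
      rw [← hextract c s, hc]
      exact hq0 s
    apply Subtype.ext
    rw [← hc]
    simp [hcz]
  have hGsurj : Function.Surjective G :=
    (LinearMap.injective_iff_surjective_of_finrank_eq_finrank
      (by rw [hdim, Module.finrank_fintype_fun_eq_card, Fintype.card_fin])).mp hGinj
  -- the span decomposition at level μ - 1
  obtain ⟨bs, hbs⟩ := hB (μ - 1)
  have hdecomp : ∀ p : MvPolynomial (Fin n) ℂ,
      ∃ (a : {j' : Fin μ // mdeg (β j') ≤ μ - 1} → ℂ)
        (q : MvPolynomial (Fin n) ℂ),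
        q ∈ Q + mIdeal (0 : Fin n → ℂ) ^ (μ - 1 + 1) ∧
        p = (∑ s, a s • monomial (β s.1) (1 : ℂ)) + q := by
    intro p
    obtain ⟨mkJ, hmkJ⟩ : ∃ f : MvPolynomial (Fin n) ℂ →ₗ[ℂ]
        (MvPolynomial (Fin n) ℂ ⧸ (Q + mIdeal (0 : Fin n → ℂ) ^ (μ - 1 + 1))),
        ∀ x, f x = Ideal.Quotient.mk (Q + mIdeal (0 : Fin n → ℂ) ^ (μ - 1 + 1)) x :=
      ⟨(Ideal.Quotient.mkₐ ℂ _).toLinearMap, fun _ => rfl⟩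
    have hrep := bs.sum_repr (mkJ p)
    refine ⟨fun s => bs.repr (mkJ p) s,
      p - ∑ s, (bs.repr (mkJ p)) s • monomial (β s.1) (1 : ℂ), ?_, by ring⟩
    have h1 : mkJ (∑ s, (bs.repr (mkJ p)) s • monomial (β s.1) (1 : ℂ)) = mkJ p := by
      rw [map_sum]
      have h2 : ∀ s ∈ Finset.univ, mkJ ((bs.repr (mkJ p)) s • monomial (β s.1) (1 : ℂ))
          = (bs.repr (mkJ p)) s • bs s := by
        intro s _
        rw [map_smul]
        simp only [hmkJ]
        exact congrArg _ (hbs s).symm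
      rw [Finset.sum_congr rfl h2]
      exact hrep
    have h3 : mkJ (p - ∑ s, (bs.repr (mkJ p)) s • monomial (β s.1) (1 : ℂ)) = 0 := by
      rw [map_sub, h1, sub_self]
    rw [hmkJ] at h3
    exact Ideal.Quotient.eq_zero_iff_mem.mp h3
  -- THE KEY DEGREE BOUND
  have hKEY : ∀ j γ, mdeg (β j) < mdeg γ → coeff γ (Λ j) = 0 := by
    intro j γ hγ
    set t := mdeg (β j) with ht
    obtain ⟨bt, hbt⟩ := hB t
    obtain ⟨φ, hφ⟩ : ∃ φ : MvPolynomial (Fin n) ℂ →ₗ[ℂ] ℂ,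
        ∀ p, φ p = bt.coord ⟨j, le_rfl⟩
          (Ideal.Quotient.mk (Q + mIdeal (0 : Fin n → ℂ) ^ (t + 1)) p) :=
      ⟨(bt.coord ⟨j, le_rfl⟩).comp (Ideal.Quotient.mkₐ ℂ _).toLinearMap, fun _ => rfl⟩
    have hφI : ∀ q ∈ Q + mIdeal (0 : Fin n → ℂ) ^ (t + 1), φ q = 0 := by
      intro q hq
      rw [hφ, Ideal.Quotient.eq_zero_iff_mem.mpr hq, map_zero]
    have hφhigh : ∀ δ : Fin n →₀ ℕ, t < mdeg δ → φ (monomial δ (1 : ℂ)) = 0 := by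
      intro δ hδ
      apply hφI
      apply Submodule.mem_sup_right
      exact Ideal.pow_le_pow_right (by omega) (monomial_mem_pow_mIdeal δ)
    have hφβ : ∀ s, φ (monomial (β s) (1 : ℂ)) = if j = s then 1 else 0 := by
      intro s
      by_cases hs : mdeg (β s) ≤ t
      · rw [hφ, ← hbt ⟨s, hs⟩, Module.Basis.coord_apply, Module.Basis.repr_self, Finsupp.single_apply]
        by_cases h : s = j
        · subst h
          rw [if_pos rfl, if_pos rfl]
        · rw [if_neg (by simp [h]), if_neg (fun hh => h hh.symm)]
      · have hjs : j ≠ s := by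
          intro hh
          subst hh
          exact hs le_rfl
        rw [if_neg hjs]
        exact hφhigh (β s) (by omega)
    obtain ⟨Λq, hΛq⟩ := hGsurj (fun s => φ (monomial (β s) (1 : ℂ)))
    have hΛq' : ∀ s, dapply 0 Λq.1 (monomial (β s) (1 : ℂ)) = φ (monomial (β s) (1 : ℂ)) :=
      fun s => congrFun hΛq s
    -- agreement of dapply Λq and φ on everything
    have hagree : ∀ p, dapply 0 Λq.1 p = φ p := by
      intro p
      obtain ⟨a, q, hqJ, hp⟩ := hdecomp p
      rw [hp]
      have hL : dapply 0 Λq.1 ((∑ s, a s • monomial (β s.1) (1 : ℂ)) + q)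
          = (∑ s, a s * dapply 0 Λq.1 (monomial (β s.1) (1 : ℂ))) + dapply 0 Λq.1 q := by
        rw [dapply_p_add, dapply_p_sum]
        congr 1
        exact Finset.sum_congr rfl fun s _ => dapply_p_smul _ _ _
      have hR : φ ((∑ s, a s • monomial (β s.1) (1 : ℂ)) + q)
          = (∑ s, a s * φ (monomial (β s.1) (1 : ℂ))) + φ q := by
        rw [map_add, map_sum]
        congr 1
        exact Finset.sum_congr rfl fun s _ => by rw [map_smul, smul_eq_mul]
      rw [hL, hR]
      have hq0 : dapply 0 Λq.1 q = 0 := by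
        rw [Submodule.add_eq_sup] at hqJ
        obtain ⟨q1, hq1, q2, hq2, rfl⟩ := Submodule.mem_sup.mp hqJ
        rw [dapply_p_add]
        have h1 : dapply 0 Λq.1 q1 = 0 := hq1 Λq.1 Λq.2
        have hexp : μ - 1 + 1 = μ := by omega
        rw [hexp] at hq2
        have h2 : dapply 0 Λq.1 q2 = 0 := hkillm Λq.1 Λq.2 q2 hq2
        rw [h1, h2, add_zero]
      have hφq : φ q = 0 := by
        apply hφI
        have hmle : (mIdeal (0 : Fin n → ℂ)) ^ (μ - 1 + 1) ≤ (mIdeal (0 : Fin n → ℂ)) ^ (t + 1) :=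
          Ideal.pow_le_pow_right (by have := hdegall j; omega)
        have hJI : Q + mIdeal (0 : Fin n → ℂ) ^ (μ - 1 + 1)
            ≤ Q + mIdeal (0 : Fin n → ℂ) ^ (t + 1) := by
          rw [Submodule.add_eq_sup, Submodule.add_eq_sup]
          exact sup_le_sup (le_refl Q) hmle
        exact hJI hqJ
      rw [hq0, hφq]
      congr 1
      exact Finset.sum_congr rfl fun s _ => by rw [hΛq' s.1]
    -- Λq = Λ j
    have hΛqΛ : Λq.1 = Λ j := by
      obtain ⟨c, hc⟩ := hspan Λq.1 Λq.2
      have hcs : ∀ s, c s = if j = s then 1 else 0 := by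
        intro s
        rw [← hextract c s, hc, hagree (monomial (β s) (1 : ℂ)), hφβ s]
      rw [← hc, Finset.sum_congr rfl (fun s _ => by rw [hcs s])]
      simp only [ite_smul, one_smul, zero_smul]
      rw [Finset.sum_ite_eq Finset.univ j Λ, if_pos (Finset.mem_univ j)]
    have h1 : dapply 0 (Λ j) (monomial γ (1 : ℂ)) = 0 := by
      rw [← hΛqΛ, hagree]
      exact hφhigh γ hγ
    rw [dapply_monomial, mul_one] at h1
    rcases mul_eq_zero.mp h1 with h | h
    · exact absurd h (ffact_ne_zero γ)
    · exact h
  -- mdeg of β at the base point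
  have hmdegβ0 : mdeg (β ⟨0, hμ⟩) = 0 := by rw [hβ0]; simp [mdeg]
  -- CONJUNCT 1
  have hC1 : Λ ⟨0, hμ⟩ = 1 := by
    apply MvPolynomial.ext
    intro γ
    by_cases h : γ = 0
    · subst h
      have h2 := hdual ⟨0, hμ⟩ ⟨0, hμ⟩
      rw [if_pos rfl, hβ0, dapply_monomial, hffact0, one_mul, mul_one] at h2
      rw [h2, coeff_zero_one]
    · have h1 : coeff γ (Λ ⟨0, hμ⟩) = 0 := by
        apply hKEY
        rw [hmdegβ0]
        exact Nat.pos_of_ne_zero fun hh => h (mdeg_eq_zero.mp hh)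
      rw [h1, coeff_one, if_neg fun hh => h hh.symm]
  -- CONJUNCT 3
  have hC3 : ∀ (i : Fin μ) (k : Fin n),
      pderiv k (Λ i) =
        ∑ j ∈ Finset.univ.filter (fun j => mdeg (β j) < mdeg (β i)),
          dapply (0 : Fin n → ℂ) (Λ i) (monomial (β j + Finsupp.single k 1) (1 : ℂ)) •
            Λ j := by
    intro i k
    obtain ⟨c, hc⟩ := hspan (pderiv k (Λ i)) (hstab (Λ i) (hmem i) k)
    have hcj : ∀ j, c j = dapply 0 (Λ i) (monomial (β j + Finsupp.single k 1) (1 : ℂ)) := by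
      intro j
      rw [← hextract c j, hc]
      exact dapply_pderiv (Λ i) k (β j) 1
    have hc2 : ∑ j, (dapply (0 : Fin n → ℂ) (Λ i)
          (monomial (β j + Finsupp.single k 1) (1 : ℂ))) • Λ j = pderiv k (Λ i) := by
      rw [← hc]
      exact Finset.sum_congr rfl fun j _ => by rw [← hcj j]
    rw [← hc2]
    symm
    apply Finset.sum_filter_of_ne
    intro j _ hne
    by_contra hlt
    apply hne
    have hz : dapply (0 : Fin n → ℂ) (Λ i) (monomial (β j + Finsupp.single k 1) (1 : ℂ)) = 0 := by
      rw [dapply_monomial, mul_one, hKEY i _ (by rw [mdeg_add, mdeg_single]; omega), mul_zero]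
    rw [hz, zero_smul]
  -- CONJUNCT 2
  have hC2 : ∀ i, i ≠ (⟨0, hμ⟩ : Fin μ) →
      Λ i = ∑ j ∈ Finset.univ.filter (fun j => mdeg (β j) < mdeg (β i)), ∑ k,
        dapply (0 : Fin n → ℂ) (Λ i) (monomial (β j + Finsupp.single k 1) (1 : ℂ)) •
          integ k (Λ j) := by
    intro i hi
    have h0 : coeff 0 (Λ i) = 0 := by
      have h2 := hdual i ⟨0, hμ⟩
      rw [if_neg hi, hβ0, dapply_monomial, hffact0, one_mul, mul_one] at h2
      exact h2
    have htel := integ_telescope (Λ i) h0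
    calc Λ i = ∑ k, integ k (pderiv k (Λ i)) := htel.symm
      _ = ∑ k, ∑ j ∈ Finset.univ.filter (fun j => mdeg (β j) < mdeg (β i)),
            dapply (0 : Fin n → ℂ) (Λ i) (monomial (β j + Finsupp.single k 1) (1 : ℂ)) •
              integ k (Λ j) :=
          Finset.sum_congr rfl fun k _ => by rw [hC3 i k, integ_sum_smul]
      _ = _ := Finset.sum_comm
  refine ⟨hC1, hC2, hC3, ?_⟩
  -- CONJUNCT 4 : uniqueness
  intro Λ' h1 hrec
  have hind : ∀ m : ℕ, ∀ i : Fin μ, mdeg (β i) ≤ m → Λ' i = Λ i := by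
    intro m
    induction m with
    | zero =>
      intro i him
      have hβi : β i = 0 := mdeg_eq_zero.mp (Nat.le_zero.mp him)
      have hii : i = ⟨0, hμ⟩ := hβinj (by rw [hβi, hβ0])
      rw [hii, h1, hC1]
    | succ m ih =>
      intro i him
      by_cases hc : mdeg (β i) ≤ m
      · exact ih i hc
      · have hii₀ : i ≠ (⟨0, hμ⟩ : Fin μ) := by
          intro hh
          rw [hh, hmdegβ0] at hc
          omega
        rw [hrec i hii₀]
        conv_rhs => rw [hC2 i hii₀]
        apply Finset.sum_congr rfl
        intro j hj
        have hj' : mdeg (β j) < mdeg (β i) := (Finset.mem_filter.mp hj).2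
        have hjm : mdeg (β j) ≤ m := by omega
        rw [ih j hjm]
  funext i
  exact hind (mdeg (β i)) i le_rfl
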